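/- For every natural number k ≥ 2, k/(e(k−1)) − (1/(e^k (k−1))) · ∑_{r'=0}^{k−1} ∑_{i=0}^{r'} (k−1)^i / i! ≥ (1/e)·(1 − √(k−1) / ((k+1)·√(2π))), where e is Euler's number, π is the circle constant, and all arithmetic is over the real numbers. -/

import Mathlib

open Finset Real

/-- Nat factorial pairing inequality: `(m+t)! ≤ m^(2t+1) * (m-1-t)!` for `t < m`. -/
lemma fact_pair (m : ℕ) : ∀ t, t < m → (m + t).factorial ≤ m ^ (2 * t + 1) * (m - 1 - t).factorial := by
  intro t
  induction t with
  | zero =>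
    intro h
    obtain ⟨n, rfl⟩ : ∃ n, m = n + 1 := ⟨m - 1, by omega⟩
    simp [Nat.factorial_succ, pow_one]
  | succ t ih =>
    intro h
    have ih' := ih (by omega)
    obtain ⟨s, hs⟩ : ∃ s, m = s + t + 2 := ⟨m - t - 2, by omega⟩
    have h1 : m - 1 - t = s + 1 := by omega
    have h2 : m - 1 - (t + 1) = s := by omega
    have h3 : (m - 1 - t).factorial = (s + 1) * s.factorial := by
      rw [h1, Nat.factorial_succ]
    calc (m + (t + 1)).factorial = (m + t + 1) * (m + t).factorial := by
          rw [show m + (t+1) = (m + t) + 1 by omega, Nat.factorial_succ]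
      _ ≤ (m + t + 1) * (m ^ (2 * t + 1) * ((s + 1) * s.factorial)) := by
          exact Nat.mul_le_mul_left _ (h3 ▸ ih')
      _ = ((m + t + 1) * (s + 1)) * m ^ (2 * t + 1) * s.factorial := by ring
      _ ≤ (m * m) * m ^ (2 * t + 1) * s.factorial := by
          have : (m + t + 1) * (s + 1) ≤ m * m := by nlinarith [hs]
          exact Nat.mul_le_mul_right _ (Nat.mul_le_mul_right _ this)
      _ = m ^ (2 * (t + 1) + 1) * (m - 1 - (t + 1)).factorial := by
          rw [h2, show 2 * (t + 1) + 1 = (2 * t + 1) + 2 by omega, pow_add]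
          ring

/-- Termwise comparison over ℝ. -/
lemma term_pair (m j : ℕ) (hj : j < m) :
    (m : ℝ) ^ (m - 1 - j) / (m - 1 - j).factorial ≤ (m : ℝ) ^ (m + j) / (m + j).factorial := by
  rw [div_le_div_iff₀ (by positivity) (by positivity)]
  have key : m ^ (m - 1 - j) * (m + j).factorial ≤ m ^ (m + j) * (m - 1 - j).factorial := by
    calc m ^ (m - 1 - j) * (m + j).factorial
        ≤ m ^ (m - 1 - j) * (m ^ (2 * j + 1) * (m - 1 - j).factorial) :=
          Nat.mul_le_mul_left _ (fact_pair m j hj)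
      _ = m ^ (m - 1 - j + (2 * j + 1)) * (m - 1 - j).factorial := by rw [pow_add]; ring
      _ = m ^ (m + j) * (m - 1 - j).factorial := by rw [show m - 1 - j + (2 * j + 1) = m + j by omega]
  exact_mod_cast key

/-- `∑_{i<m} m^i/i! ≤ e^m / 2`. -/
lemma half_bound (m : ℕ) : ∑ i ∈ range m, (m : ℝ) ^ i / i.factorial ≤ Real.exp m / 2 := by
  have h1 : ∑ i ∈ range m, (m : ℝ) ^ i / i.factorial
      ≤ ∑ j ∈ range m, (m : ℝ) ^ (m + j) / (m + j).factorial := by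
    rw [← Finset.sum_range_reflect (fun i => (m : ℝ) ^ i / i.factorial) m]
    exact Finset.sum_le_sum fun j hj => term_pair m j (Finset.mem_range.mp hj)
  have h2 : ∑ i ∈ range (m + m), (m : ℝ) ^ i / i.factorial
      = ∑ i ∈ range m, (m : ℝ) ^ i / i.factorial
        + ∑ j ∈ range m, (m : ℝ) ^ (m + j) / (m + j).factorial :=
    Finset.sum_range_add (fun i => (m : ℝ) ^ i / i.factorial) m m
  have h3 : ∑ i ∈ range (m + m), (m : ℝ) ^ i / i.factorial ≤ Real.exp m :=
    Real.sum_le_exp_of_nonneg (by positivity) _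
  linarith

/-- Stirling lower bound consequence: `m^m/m! ≤ e^m / (√π · √(2m))` for `m ≥ 1`. -/
lemma stirling_bound (m : ℕ) (hm : 1 ≤ m) :
    (m : ℝ) ^ m / m.factorial ≤ Real.exp 1 ^ m / (Real.sqrt π * Real.sqrt (2 * m)) := by
  have hπ : Real.sqrt π ≤ Stirling.stirlingSeq m := by
    have ht : Filter.Tendsto (Stirling.stirlingSeq ∘ Nat.succ) Filter.atTop (nhds (Real.sqrt π)) :=
      Stirling.tendsto_stirlingSeq_sqrt_pi.comp (Filter.tendsto_add_atTop_nat 1)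
    have := Stirling.stirlingSeq'_antitone.le_of_tendsto ht (m - 1)
    simpa [Function.comp, Nat.succ_eq_add_one, Nat.sub_add_cancel hm] using this
  have hm0 : (0 : ℝ) < m := by exact_mod_cast hm
  have hB : (0 : ℝ) < Real.sqrt (2 * m) * ((m : ℝ) / Real.exp 1) ^ m := by positivity
  rw [Stirling.stirlingSeq, le_div_iff₀ hB] at hπ
  have hfac : Real.sqrt π * Real.sqrt (2 * m) * ((m : ℝ) ^ m / Real.exp 1 ^ m) ≤ m.factorial := by
    calc Real.sqrt π * Real.sqrt (2 * m) * ((m : ℝ) ^ m / Real.exp 1 ^ m)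
        = Real.sqrt π * (Real.sqrt (2 * m) * ((m : ℝ) / Real.exp 1) ^ m) := by
          rw [div_pow]; ring
      _ ≤ m.factorial := hπ
  rw [div_le_div_iff₀ (by positivity) (by positivity)]
  have hexp : (0 : ℝ) < Real.exp 1 ^ m := by positivity
  have hexp' : (Real.exp 1 ^ m) ≠ 0 := ne_of_gt hexp
  calc (m : ℝ) ^ m * (Real.sqrt π * Real.sqrt (2 * m))
      = Real.exp 1 ^ m * (Real.sqrt π * Real.sqrt (2 * m) * ((m : ℝ) ^ m / Real.exp 1 ^ m)) := by
        field_simp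
    _ ≤ Real.exp 1 ^ m * m.factorial := mul_le_mul_of_nonneg_left hfac hexp.le

/-- Telescoping: `∑_{i≤n} (m - i) m^i/i! = m · m^n/n!`. -/
lemma telescope (m : ℕ) : ∀ n : ℕ,
    ∑ i ∈ range (n + 1), ((m : ℝ) - i) * ((m : ℝ) ^ i / i.factorial)
      = (m : ℝ) * ((m : ℝ) ^ n / n.factorial) := by
  intro n
  induction n with
  | zero => simp
  | succ n ih =>
    rw [Finset.sum_range_succ, ih]
    have hne : (n.factorial : ℝ) ≠ 0 := by positivity
    have hne2 : ((n:ℝ) + 1) ≠ 0 := by positivity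
    rw [Nat.factorial_succ]
    push_cast
    field_simp
    ring

/-- Sum swap: `∑_{r'<K} ∑_{i≤r'} f i = ∑_{i<K} (K - i) f i`. -/
lemma swap_sum (f : ℕ → ℝ) : ∀ K : ℕ,
    ∑ r' ∈ range K, ∑ i ∈ range (r' + 1), f i = ∑ i ∈ range K, ((K : ℝ) - i) * f i := by
  intro K
  induction K with
  | zero => simp
  | succ K ih =>
    rw [Finset.sum_range_succ, ih]
    have h1 : ∀ i ∈ range (K + 1), (((K + 1 : ℕ) : ℝ) - i) * f i = ((K : ℝ) - i) * f i + f i := by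
      intro i _; push_cast; ring
    rw [Finset.sum_congr rfl h1, Finset.sum_add_distrib,
      Finset.sum_range_succ (fun i => ((K : ℝ) - i) * f i)]
    simp

lemma sqrt_two_pi_ge : (2.5 : ℝ) ≤ Real.sqrt (2 * π) := by
  rw [show (2.5:ℝ) = Real.sqrt (2.5 ^ 2) from (Real.sqrt_sq (by norm_num)).symm]
  apply Real.sqrt_le_sqrt
  nlinarith [Real.pi_gt_d6]

lemma sqrt_two_pi_le : Real.sqrt (2 * π) ≤ 2.5067 := by
  rw [Real.sqrt_le_left (by norm_num)]
  nlinarith [Real.pi_lt_d6]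

set_option maxHeartbeats 1000000 in
/-- The key bound: `S ≤ e^m (1 + m√m / ((m+2)√(2π)))`. -/
lemma key_bound (m : ℕ) (hm : 1 ≤ m) :
    ∑ r' ∈ range (m + 1), ∑ i ∈ range (r' + 1), (m : ℝ) ^ i / i.factorial
      ≤ Real.exp 1 ^ m *
        (1 + (m : ℝ) * Real.sqrt m / (((m : ℝ) + 2) * Real.sqrt (2 * π))) := by
  have hc0 : (0 : ℝ) < Real.sqrt (2 * π) := Real.sqrt_pos.mpr (by positivity)
  have hS : ∑ r' ∈ range (m + 1), ∑ i ∈ range (r' + 1), (m : ℝ) ^ i / i.factorial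
      = ∑ i ∈ range m, (m : ℝ) ^ i / i.factorial
        + ((m : ℝ) + 1) * ((m : ℝ) ^ m / m.factorial) := by
    rw [swap_sum]
    have h1 : ∀ i ∈ range (m + 1), (((m + 1 : ℕ) : ℝ) - i) * ((m : ℝ) ^ i / i.factorial)
        = ((m : ℝ) - i) * ((m : ℝ) ^ i / i.factorial) + (m : ℝ) ^ i / i.factorial := by
      intro i _; push_cast; ring
    rw [Finset.sum_congr rfl h1, Finset.sum_add_distrib, telescope m m,
      Finset.sum_range_succ (fun i => (m : ℝ) ^ i / i.factorial)]
    ring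
  rcases le_or_gt 4 m with h4 | h4
  · -- general case, m ≥ 4
    have hs2 : (2 : ℝ) ≤ Real.sqrt m := by
      rw [Real.le_sqrt (by norm_num) (by positivity)]
      norm_num
      exact_mod_cast h4
    have hss : Real.sqrt m ^ 2 = (m : ℝ) := Real.sq_sqrt (by positivity)
    have hs0 : (0 : ℝ) < Real.sqrt m := by linarith
    have hc : (2.5 : ℝ) ≤ Real.sqrt (2 * π) := sqrt_two_pi_ge
    have hsplit : Real.sqrt π * Real.sqrt (2 * m) = Real.sqrt (2 * π) * Real.sqrt m := by
      rw [Real.sqrt_mul (by norm_num : (0:ℝ) ≤ 2) (m : ℝ),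
        Real.sqrt_mul (by norm_num : (0:ℝ) ≤ 2) π]
      ring
    set s := Real.sqrt m with hs_def
    set c := Real.sqrt (2 * π) with hc_def
    have hpoly : 2 * (3 * (m : ℝ) + 2) ≤ c * s * ((m : ℝ) + 2) := by
      have step1 : 2 * (3 * (m : ℝ) + 2) ≤ 2.5 * s * ((m : ℝ) + 2) := by
        nlinarith [mul_nonneg (sub_nonneg.mpr hs2) (sq_nonneg (s - 1)), hss, hs2]
      have step2 : 2.5 * s * ((m : ℝ) + 2) ≤ c * s * ((m : ℝ) + 2) := by
        have hmm : (0 : ℝ) ≤ s * ((m : ℝ) + 2) := by positivity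
        nlinarith [mul_nonneg (sub_nonneg.mpr hc) hmm]
      linarith
    have hscalar : (1 : ℝ) / 2 + ((m : ℝ) + 1) / (c * s)
        ≤ 1 + (m : ℝ) * s / (((m : ℝ) + 2) * c) := by
      rw [← sub_nonneg]
      have heq : 1 + (m : ℝ) * s / (((m : ℝ) + 2) * c) - (1 / 2 + ((m : ℝ) + 1) / (c * s))
          = (c * s * ((m : ℝ) + 2) + 2 * ((m : ℝ) * s ^ 2 - ((m : ℝ) + 1) * ((m : ℝ) + 2)))
            / (2 * (c * s * ((m : ℝ) + 2))) := by
        field_simp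
        ring
      rw [heq]
      apply div_nonneg _ (by positivity)
      rw [hss]
      nlinarith [hpoly]
    have hE : (0 : ℝ) < Real.exp 1 ^ m := by positivity
    have hEm : Real.exp (m : ℝ) = Real.exp 1 ^ m := by
      rw [← Real.exp_nat_mul]; norm_num
    have hT : ∑ i ∈ range m, (m : ℝ) ^ i / i.factorial ≤ Real.exp 1 ^ m / 2 := by
      have := half_bound m
      rwa [hEm] at this
    have hU : ((m : ℝ) + 1) * ((m : ℝ) ^ m / m.factorial)
        ≤ ((m : ℝ) + 1) * (Real.exp 1 ^ m / (c * s)) := by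
      apply mul_le_mul_of_nonneg_left _ (by positivity)
      have := stirling_bound m hm
      rwa [hsplit] at this
    have hfinal : Real.exp 1 ^ m / 2 + ((m : ℝ) + 1) * (Real.exp 1 ^ m / (c * s))
        ≤ Real.exp 1 ^ m * (1 + (m : ℝ) * s / (((m : ℝ) + 2) * c)) := by
      have expand1 : Real.exp 1 ^ m / 2 + ((m : ℝ) + 1) * (Real.exp 1 ^ m / (c * s))
          = Real.exp 1 ^ m * (1 / 2 + ((m : ℝ) + 1) / (c * s)) := by ring
      rw [expand1]
      exact mul_le_mul_of_nonneg_left hscalar hE.le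
    rw [hS]
    linarith
  · -- small cases m = 1, 2, 3
    have he := Real.exp_one_gt_d9
    have hcle := sqrt_two_pi_le
    have hE2 : (7.389056 : ℝ) ≤ Real.exp 1 ^ 2 := by nlinarith [he]
    have hE3 : (20.0855 : ℝ) ≤ Real.exp 1 ^ 3 := by nlinarith [he, hE2, Real.exp_pos 1]
    have hqp : Real.sqrt 2 * Real.sqrt π = Real.sqrt (2 * π) :=
      (Real.sqrt_mul (by norm_num) π).symm
    have hr2 : (1.414213 : ℝ) ≤ Real.sqrt 2 := by
      rw [show (1.414213:ℝ) = Real.sqrt (1.414213 ^ 2) from (Real.sqrt_sq (by norm_num)).symm]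
      exact Real.sqrt_le_sqrt (by norm_num)
    have hr3 : (1.732050 : ℝ) ≤ Real.sqrt 3 := by
      rw [show (1.732050:ℝ) = Real.sqrt (1.732050 ^ 2) from (Real.sqrt_sq (by norm_num)).symm]
      exact Real.sqrt_le_sqrt (by norm_num)
    have hr2' : (0:ℝ) ≤ Real.sqrt 2 := Real.sqrt_nonneg 2
    have hr3' : (0:ℝ) ≤ Real.sqrt 3 := Real.sqrt_nonneg 3
    interval_cases m
    · rw [hS]
      norm_num [Finset.sum_range_succ, Nat.factorial]
      have h1 : (Real.sqrt π)⁻¹ * (Real.sqrt 2)⁻¹ = (Real.sqrt (2 * π))⁻¹ := by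
        rw [← mul_inv, mul_comm, hqp]
      rw [h1]
      have h2 : Real.exp 1 * (1 + (Real.sqrt (2 * π))⁻¹ * (1 / 3))
          = Real.exp 1 * (3 * Real.sqrt (2 * π) + 1) / (3 * Real.sqrt (2 * π)) := by
        field_simp
      rw [h2, le_div_iff₀ (by positivity)]
      have P : 0 ≤ (Real.exp 1 - 2.7182818283) * Real.sqrt (2 * π) :=
        mul_nonneg (sub_nonneg.mpr he.le) hc0.le
      nlinarith [P, hcle, he, hc0]
    · rw [hS]
      norm_num [Finset.sum_range_succ, Nat.factorial]
      rw [hqp]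
      have hE2' : (7.389056 : ℝ) ≤ Real.exp 2 := by
        rw [show (2:ℝ) = ((2:ℕ):ℝ) * 1 by norm_num, Real.exp_nat_mul]
        exact hE2
      have h2 : Real.exp 2 * (1 + 2 * Real.sqrt 2 / (4 * Real.sqrt (2 * π)))
          = Real.exp 2 * (4 * Real.sqrt (2 * π) + 2 * Real.sqrt 2) / (4 * Real.sqrt (2 * π)) := by
        field_simp
      rw [h2, le_div_iff₀ (by positivity)]
      have P : 0 ≤ (Real.exp 2 - 7.389056) * Real.sqrt (2 * π) :=
        mul_nonneg (sub_nonneg.mpr hE2') hc0.le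
      have Q : 0 ≤ (Real.exp 2 - 7.389056) * Real.sqrt 2 :=
        mul_nonneg (sub_nonneg.mpr hE2') hr2'
      nlinarith [P, Q, hr2, hcle, hc0]
    · rw [hS]
      norm_num [Finset.sum_range_succ, Nat.factorial]
      rw [hqp]
      have hE3' : (20.0855 : ℝ) ≤ Real.exp 3 := by
        rw [show (3:ℝ) = ((3:ℕ):ℝ) * 1 by norm_num, Real.exp_nat_mul]
        exact hE3
      have h2 : Real.exp 3 * (1 + 3 * Real.sqrt 3 / (5 * Real.sqrt (2 * π)))
          = Real.exp 3 * (5 * Real.sqrt (2 * π) + 3 * Real.sqrt 3) / (5 * Real.sqrt (2 * π)) := by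
        field_simp
      rw [h2, le_div_iff₀ (by positivity)]
      have P : 0 ≤ (Real.exp 3 - 20.0855) * Real.sqrt (2 * π) :=
        mul_nonneg (sub_nonneg.mpr hE3') hc0.le
      have Q : 0 ≤ (Real.exp 3 - 20.0855) * Real.sqrt 3 :=
        mul_nonneg (sub_nonneg.mpr hE3') hr3'
      nlinarith [P, Q, hr3, hcle, hc0]

/-- The analytic core of Theorem 1 of the paper. -/
theorem competitive_ratio_bound (k : ℕ) (hk : 2 ≤ k) :
    (k : ℝ) / (Real.exp 1 * ((k : ℝ) - 1))
      - 1 / (Real.exp 1 ^ k * ((k : ℝ) - 1)) *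
          ∑ r' ∈ Finset.range k, ∑ i ∈ Finset.range (r' + 1),
            ((k : ℝ) - 1) ^ i / (Nat.factorial i) ≥
      1 / Real.exp 1 *
        (1 - Real.sqrt ((k : ℝ) - 1) / (((k : ℝ) + 1) * Real.sqrt (2 * Real.pi))) := by
  obtain ⟨m, rfl⟩ : ∃ m, k = m + 1 := ⟨k - 1, by omega⟩
  have hm : 1 ≤ m := by omega
  have hcast : ((m + 1 : ℕ) : ℝ) - 1 = (m : ℝ) := by push_cast; ring
  rw [hcast]
  have hm0 : (0 : ℝ) < m := by exact_mod_cast hm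
  have hc0 : (0 : ℝ) < Real.sqrt (2 * π) := Real.sqrt_pos.mpr (by positivity)
  have hE : (0 : ℝ) < Real.exp 1 ^ (m + 1) := by positivity
  have key := key_bound m hm
  have h1 : 1 / (Real.exp 1 ^ (m + 1) * (m : ℝ)) *
        (∑ r' ∈ Finset.range (m + 1), ∑ i ∈ Finset.range (r' + 1),
          (m : ℝ) ^ i / (Nat.factorial i))
      ≤ 1 / (Real.exp 1 ^ (m + 1) * (m : ℝ)) *
        (Real.exp 1 ^ m * (1 + (m : ℝ) * Real.sqrt m / (((m : ℝ) + 2) * Real.sqrt (2 * π)))) :=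
    mul_le_mul_of_nonneg_left key (by positivity)
  have h2 : ((m + 1 : ℕ) : ℝ) / (Real.exp 1 * (m : ℝ))
      - 1 / (Real.exp 1 ^ (m + 1) * (m : ℝ)) *
        (Real.exp 1 ^ m * (1 + (m : ℝ) * Real.sqrt m / (((m : ℝ) + 2) * Real.sqrt (2 * π))))
      = 1 / Real.exp 1 *
        (1 - Real.sqrt m / ((((m + 1 : ℕ) : ℝ) + 1) * Real.sqrt (2 * π))) := by
    have hpow : Real.exp 1 ^ (m + 1) = Real.exp 1 ^ m * Real.exp 1 := pow_succ _ _
    have hexpne : Real.exp 1 ≠ 0 := (Real.exp_pos 1).ne'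
    have hEm : (Real.exp 1 ^ m : ℝ) ≠ 0 := by positivity
    push_cast
    rw [hpow]
    field_simp
    ring
  linarith [h1, h2]
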